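/- arXiv:1711.01541 — 3 statements merged into one kernel-verified Lean document; each statement's English description precedes it below -/
import Mathlib

section
/- Let n ≥ 1, let M be an s × t matrix with entries in ℤ/nℤ, with rows m₁, …, m_s, and let c ∈ (ℤ/nℤ)^s be a column vector with entries c₁, …, c_s. Then the equation M·x = c has no solution x ∈ (ℤ/nℤ)^t if and only if there exist b₁, …, b_s ∈ ℤ/nℤ such that the linear combination Σᵢ bᵢ·mᵢ of the rows of M is the zero row vector while Σᵢ bᵢ·cᵢ ≠ 0 in ℤ/nℤ. -/
private lemma zkey {n : ℕ} [NeZero n] (a y : ZMod n)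
    (h : ∀ r : ZMod n, r * a = 0 → r * y = 0) : ∃ z : ZMod n, a * z = y := by
  have hn : 0 < n := NeZero.pos n
  set d := Nat.gcd a.val n with hd
  have hd0 : 0 < d := Nat.gcd_pos_of_pos_right _ hn
  have hdn : d ∣ n := Nat.gcd_dvd_right _ _
  have hda : d ∣ a.val := Nat.gcd_dvd_left _ _
  have hacast : ((a.val : ℕ) : ZMod n) = a := ZMod.natCast_rightInverse a
  have hycast : ((y.val : ℕ) : ZMod n) = y := ZMod.natCast_rightInverse y
  have step1 : ((n / d : ℕ) : ZMod n) * a = 0 := by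
    rw [← hacast, ← Nat.cast_mul, ZMod.natCast_eq_zero_iff]
    have : (n / d) * d ∣ (n / d) * a.val := mul_dvd_mul_left _ hda
    rwa [Nat.div_mul_cancel hdn] at this
  have step2 : ((n / d : ℕ) : ZMod n) * y = 0 := h _ step1
  have step2' : n ∣ (n / d) * y.val := by
    rw [← ZMod.natCast_eq_zero_iff, Nat.cast_mul, hycast]; exact step2
  have hnd0 : 0 < n / d := Nat.div_pos (Nat.le_of_dvd hn hdn) hd0
  have step3 : d ∣ y.val := by
    have : (n / d) * d ∣ (n / d) * y.val := by rwa [Nat.div_mul_cancel hdn]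
    exact (mul_dvd_mul_iff_left hnd0.ne').mp this
  -- Bezout
  have hbez : ((d : ℕ) : ZMod n) = a * ((Nat.gcdA a.val n : ℤ) : ZMod n) := by
    have hgcd := Nat.gcd_eq_gcd_ab a.val n
    calc ((d : ℕ) : ZMod n) = (((d : ℕ) : ℤ) : ZMod n) := by push_cast; ring
      _ = (((a.val : ℤ) * Nat.gcdA a.val n + (n : ℤ) * Nat.gcdB a.val n : ℤ) : ZMod n) := by
          rw [← hgcd]
      _ = a * ((Nat.gcdA a.val n : ℤ) : ZMod n) := by
          push_cast
          rw [hacast]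
          simp [ZMod.natCast_self]
  refine ⟨((Nat.gcdA a.val n : ℤ) : ZMod n) * ((y.val / d : ℕ) : ZMod n), ?_⟩
  rw [← mul_assoc, ← hbez, ← Nat.cast_mul, Nat.mul_div_cancel' step3, hycast]

private lemma zbaer (n : ℕ) [NeZero n] : Module.Baer (ZMod n) (ZMod n) := by
  haveI : IsPrincipalIdealRing (ZMod n) :=
    IsPrincipalIdealRing.of_surjective (Int.castRingHom (ZMod n)) ZMod.intCast_surjective
  intro I g
  obtain ⟨a, rfl⟩ : ∃ a : ZMod n, I = Ideal.span {a} :=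
    ⟨_, (Submodule.IsPrincipal.span_singleton_generator I).symm⟩
  have hmem : a ∈ Ideal.span {a} := Submodule.mem_span_singleton_self a
  set y := g ⟨a, hmem⟩ with hy
  have h : ∀ r : ZMod n, r * a = 0 → r * y = 0 := by
    intro r hr
    have h0 : r • (⟨a, hmem⟩ : Ideal.span {a}) = 0 := by
      apply Subtype.ext
      simpa [smul_eq_mul] using hr
    calc r * y = g (r • ⟨a, hmem⟩) := by rw [map_smul]; simp [smul_eq_mul, hy]
    _ = 0 := by rw [h0, map_zero]
  obtain ⟨z, hz⟩ := zkey a y h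
  refine ⟨LinearMap.toSpanSingleton (ZMod n) (ZMod n) z, ?_⟩
  intro x hx
  obtain ⟨r, rfl⟩ := Ideal.mem_span_singleton'.mp hx
  have h1 : (⟨r * a, hx⟩ : Ideal.span {a}) = r • ⟨a, hmem⟩ := by
    apply Subtype.ext; simp [smul_eq_mul]
  rw [h1, map_smul]
  simp only [LinearMap.toSpanSingleton_apply, smul_eq_mul, ← hy]
  rw [← hz]; ring

private lemma exists_functional {n : ℕ} [NeZero n] {Q : Type} [AddCommGroup Q]
    [Module (ZMod n) Q] {q : Q} (hq : q ≠ 0) :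
    ∃ ℓ : Q →ₗ[ZMod n] ZMod n, ℓ q ≠ 0 := by
  have hn : 0 < n := NeZero.pos n
  set f₀ : ZMod n →ₗ[ZMod n] Q := LinearMap.toSpanSingleton (ZMod n) Q q with hf₀
  have hnsmul : n • q = 0 := by
    rw [← Nat.cast_smul_eq_nsmul (ZMod n), ZMod.natCast_self, zero_smul]
  have hfin : IsOfFinAddOrder q := isOfFinAddOrder_iff_nsmul_eq_zero.mpr ⟨n, hn, hnsmul⟩
  set e := addOrderOf q with he
  have he0 : 0 < e := hfin.addOrderOf_pos
  have he1 : e ≠ 1 := by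
    intro h1
    exact hq (AddMonoid.addOrderOf_eq_one_iff.mp h1)
  have he2 : 2 ≤ e := by omega
  have hedvd : e ∣ n := addOrderOf_dvd_iff_nsmul_eq_zero.mpr hnsmul
  set w : ZMod n := ((n / e : ℕ) : ZMod n) with hw
  have hne0 : 0 < n / e := Nat.div_pos (Nat.le_of_dvd hn hedvd) he0
  have hnen : n / e < n := Nat.div_lt_self hn he2
  have hwne : w ≠ 0 := by
    rw [hw, Ne, ZMod.natCast_eq_zero_iff]
    intro hdvd
    exact absurd (Nat.le_of_dvd hne0 hdvd) (by omega)
  have hker : LinearMap.ker f₀ ≤ LinearMap.ker (LinearMap.toSpanSingleton (ZMod n) (ZMod n) w) := by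
    intro r hr
    have hrq : r • q = 0 := hr
    have hrcast : ((r.val : ℕ) : ZMod n) = r := by
      exact ZMod.natCast_rightInverse r
    have hrv : r.val • q = 0 := by
      rw [← Nat.cast_smul_eq_nsmul (ZMod n), hrcast]; exact hrq
    have hedvd' : e ∣ r.val := addOrderOf_dvd_iff_nsmul_eq_zero.mpr hrv
    obtain ⟨k, hk⟩ := hedvd'
    have : r • w = 0 := by
      rw [smul_eq_mul, hw, ← hrcast, ← Nat.cast_mul, ZMod.natCast_eq_zero_iff, hk]
      refine ⟨k, ?_⟩
      rw [mul_assoc, mul_comm k (n/e), ← mul_assoc, Nat.mul_div_cancel' hedvd, mul_comm]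
    exact this
  set ψ : (ZMod n ⧸ LinearMap.ker f₀) →ₗ[ZMod n] ZMod n :=
    Submodule.liftQ (LinearMap.ker f₀) (LinearMap.toSpanSingleton (ZMod n) (ZMod n) w) hker with hψ
  set eqv := f₀.quotKerEquivRange with heqv
  set g : (LinearMap.range f₀) →ₗ[ZMod n] ZMod n := ψ ∘ₗ eqv.symm.toLinearMap with hg
  obtain ⟨ℓ, hℓ⟩ := (zbaer n).extension_property (LinearMap.range f₀).subtype
    Subtype.val_injective g
  have hqmem : q ∈ LinearMap.range f₀ := ⟨1, by simp [hf₀]⟩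
  refine ⟨ℓ, ?_⟩
  have h1 : ℓ q = g ⟨q, hqmem⟩ := by
    have := congrFun (congrArg (fun m => m.toFun) hℓ) ⟨q, hqmem⟩
    simpa using this
  have h2 : eqv.symm ⟨q, hqmem⟩ = Submodule.Quotient.mk 1 := by
    rw [LinearEquiv.symm_apply_eq]
    apply Subtype.ext
    rw [heqv]
    symm
    show ((f₀.quotKerEquivRange) (Submodule.Quotient.mk 1) : Q) = q
    rw [LinearMap.quotKerEquivRange_apply_mk]
    simp [hf₀]

  rw [h1, hg]
  simp only [LinearMap.coe_comp, Function.comp_apply, LinearEquiv.coe_toLinearMap, h2]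
  rw [hψ]
  rw [Submodule.liftQ_apply]
  simpa using hwne

/-- **Lemma 5 (paper), matrix form.** Let `n ≥ 1`, let `M` be an `s × t` matrix over
`ℤ/nℤ` and `c ∈ (ℤ/nℤ)^s`. The equation `M·x = c` has no solution `x ∈ (ℤ/nℤ)^t`
if and only if there are `b₁, …, b_s ∈ ℤ/nℤ` with `Σᵢ bᵢ·mᵢ = 0` (as a row vector)
but `Σᵢ bᵢ·cᵢ ≠ 0`. -/
theorem no_solution_iff_row_combination (n s t : ℕ) (hn : 1 ≤ n)
    (M : Matrix (Fin s) (Fin t) (ZMod n)) (c : Fin s → ZMod n) :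
    (¬ ∃ x : Fin t → ZMod n, M.mulVec x = c) ↔
      ∃ b : Fin s → ZMod n,
        (∀ j : Fin t, ∑ i : Fin s, b i * M i j = 0) ∧ ∑ i : Fin s, b i * c i ≠ 0 := by
  haveI : NeZero n := ⟨by omega⟩
  constructor
  · intro hno
    set N := LinearMap.range (Matrix.mulVecLin M) with hN
    have hc : c ∉ N := by
      rintro ⟨x, hx⟩
      exact hno ⟨x, by rw [← hx]; simp [Matrix.mulVecLin_apply]⟩
    have hq : (Submodule.Quotient.mk c : (Fin s → ZMod n) ⧸ N) ≠ 0 := by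
      rw [Ne, Submodule.Quotient.mk_eq_zero]; exact hc
    obtain ⟨ℓ, hℓ⟩ := exists_functional (n := n) hq
    set φ : (Fin s → ZMod n) →ₗ[ZMod n] ZMod n := ℓ ∘ₗ N.mkQ with hφdef
    set b : Fin s → ZMod n := fun i => φ (fun j => if i = j then 1 else 0) with hb
    have hφ : ∀ v : Fin s → ZMod n, φ v = ∑ i, v i * b i := by
      intro v
      rw [LinearMap.pi_apply_eq_sum_univ φ v]
      simp [smul_eq_mul, hb]
    have hvanish : ∀ v ∈ N, φ v = 0 := by
      intro v hv
      rw [hφdef]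
      simp only [LinearMap.coe_comp, Function.comp_apply, Submodule.mkQ_apply]
      rw [(Submodule.Quotient.mk_eq_zero N).mpr hv, map_zero]
    refine ⟨b, ?_, ?_⟩
    · intro j
      have hmem : (fun i => M i j) ∈ N := by
        refine ⟨fun k => if k = j then 1 else 0, ?_⟩
        funext i
        simp [Matrix.mulVecLin_apply, Matrix.mulVec, dotProduct, mul_ite]
      have := hvanish _ hmem
      rw [hφ] at this
      calc ∑ i : Fin s, b i * M i j = ∑ i : Fin s, M i j * b i := by
            simp_rw [mul_comm]
        _ = 0 := this
    · have hφc : φ c = ℓ (Submodule.Quotient.mk c) := by simp [hφdef]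
      have h3 : φ c = ∑ i, b i * c i := by
        rw [hφ c]; simp_rw [mul_comm]
      rw [← h3, hφc]
      exact hℓ
  · rintro ⟨b, hb, hbc⟩ ⟨x, hx⟩
    apply hbc
    calc ∑ i, b i * c i = ∑ i, b i * ∑ j, M i j * x j := by
          rw [← hx]; simp [Matrix.mulVec, dotProduct]
      _ = ∑ i, ∑ j, b i * M i j * x j := by
          simp_rw [Finset.mul_sum, mul_assoc]
      _ = ∑ j, ∑ i, b i * M i j * x j := Finset.sum_comm
      _ = ∑ j, (∑ i, b i * M i j) * x j := by simp_rw [Finset.sum_mul]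
      _ = 0 := by simp [hb]
end

section
/- Let n ≥ 1, let V be a finite abelian group whose exponent divides n, let φ₁, …, φ_m : V → ℤ/nℤ be group homomorphisms, and let c₁, …, c_m ∈ ℤ/nℤ. Then there is no x ∈ V with φᵢ(x) = cᵢ for all i = 1, …, m if and only if there exist b₁, …, b_m ∈ ℤ/nℤ such that the homomorphism Σᵢ bᵢ·φᵢ : V → ℤ/nℤ is identically zero while Σᵢ bᵢ·cᵢ ≠ 0 in ℤ/nℤ. -/
/-- The embedding of `ZMod n` into the rational circle sending `1` to `1/n`. -/
noncomputable def zmodToCircle (n : ℕ) : ZMod n →+ AddCircle (1 : ℚ) :=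
  ZMod.lift n ⟨CharacterModule.int.divByNat n, CharacterModule.int.divByNat_self n⟩

lemma zmodToCircle_intCast (n : ℕ) (k : ℤ) :
    zmodToCircle n (k : ZMod n) = (((k : ℚ) * (n : ℚ)⁻¹ : ℚ) : AddCircle (1 : ℚ)) := by
  rw [zmodToCircle, ZMod.lift_coe]
  show (k • ((((n : ℚ)⁻¹ : ℚ) : AddCircle (1 : ℚ)))) = _
  rw [← AddCircle.coe_zsmul]
  norm_num [zsmul_eq_mul]

lemma zmodToCircle_injective (n : ℕ) [NeZero n] :
    Function.Injective (zmodToCircle n) := by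
  rw [zmodToCircle, ZMod.lift_injective]
  intro k hk
  have hn : (n : ℚ) ≠ 0 := Nat.cast_ne_zero.mpr (NeZero.ne n)
  have : ((k • ((n : ℚ)⁻¹ : ℚ) : ℚ) : AddCircle (1 : ℚ)) = 0 := hk
  rw [AddCircle.coe_eq_zero_iff] at this
  obtain ⟨j, hj⟩ := this
  have : (k : ℚ) = j * n := by
    field_simp [zsmul_eq_mul] at hj ⊢
    simp only [zsmul_eq_mul] at hj; field_simp at hj; linarith [hj]
  have hkj : k = j * n := by exact_mod_cast this
  simp [hkj]

/-- Every finite(ly torsion) abelian group killed by `n` admits, for each nonzero element,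
a homomorphism into `ZMod n` not vanishing there. -/
lemma exists_hom_to_zmod {n : ℕ} [NeZero n] {Q : Type*} [AddCommGroup Q]
    (hQ : ∀ x : Q, n • x = 0) {q : Q} (hq : q ≠ 0) :
    ∃ ψ : Q →+ ZMod n, ψ q ≠ 0 := by
  obtain ⟨χ, hχ⟩ := CharacterModule.exists_character_apply_ne_zero_of_ne_zero hq
  have hn : (n : ℚ) ≠ 0 := Nat.cast_ne_zero.mpr (NeZero.ne n)
  have hrange : ∀ x : Q, (χ x : AddCircle (1 : ℚ)) ∈ (zmodToCircle n).range := by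
    intro x
    obtain ⟨r, hr⟩ : ∃ r : ℚ, ((r : AddCircle (1:ℚ))) = χ x :=
      Quotient.exists_rep (χ x)
    have h0 : ((n • r : ℚ) : AddCircle (1 : ℚ)) = 0 := by
      rw [AddCircle.coe_nsmul, hr, ← map_nsmul, hQ, map_zero]
    rw [AddCircle.coe_eq_zero_iff] at h0
    obtain ⟨k, hk⟩ := h0
    refine ⟨(k : ZMod n), ?_⟩
    rw [zmodToCircle_intCast, ← hr]
    congr 1
    have : (n : ℚ) * r = k := by
      simpa [zsmul_eq_mul, nsmul_eq_mul, mul_comm] using hk.symm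
    field_simp
    linarith [this]
  set e := AddMonoidHom.ofInjective (zmodToCircle_injective n) with he
  refine ⟨(e.symm.toAddMonoidHom).comp ((χ : Q →+ AddCircle (1:ℚ)).codRestrict _ hrange), ?_⟩
  intro h0
  apply hχ
  have : ((χ : Q →+ AddCircle (1:ℚ)).codRestrict _ hrange) q = 0 := by
    have h2 := (e.symm_apply_eq).mp h0
    simpa using h2
  exact congrArg Subtype.val this

/-- **Lemma 5 (paper), as applied in the proof of Theorem 4.** Let `n ≥ 1`, let `V` be a
finite abelian group whose exponent divides `n`, let `φ₁, …, φ_m : V → ℤ/nℤ` be group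
homomorphisms and `c₁, …, c_m ∈ ℤ/nℤ`. There is no `x ∈ V` with `φᵢ(x) = cᵢ` for all `i`
if and only if there are `b₁, …, b_m ∈ ℤ/nℤ` such that `Σᵢ bᵢ·φᵢ` is the zero homomorphism
while `Σᵢ bᵢ·cᵢ ≠ 0`. -/
theorem no_solution_iff_combination_of_homs (n : ℕ) (hn : 1 ≤ n)
    (V : Type*) [AddCommGroup V] [Fintype V] (hexp : ∀ x : V, n • x = 0)
    (m : ℕ) (φ : Fin m → (V →+ ZMod n)) (c : Fin m → ZMod n) :
    (¬ ∃ x : V, ∀ i : Fin m, φ i x = c i) ↔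
      ∃ b : Fin m → ZMod n,
        (∀ x : V, ∑ i : Fin m, b i * φ i x = 0) ∧ ∑ i : Fin m, b i * c i ≠ 0 := by
  haveI : NeZero n := ⟨by omega⟩
  constructor
  · intro hno
    -- the map `x ↦ (φ i x)_i` and its range
    set Φ : V →+ (Fin m → ZMod n) := AddMonoidHom.mk' (fun x i => φ i x)
      (fun x y => by funext i; simp) with hΦ
    set W : AddSubgroup (Fin m → ZMod n) := Φ.range with hW
    have hc : (QuotientAddGroup.mk c : (Fin m → ZMod n) ⧸ W) ≠ 0 := by
      rw [Ne, QuotientAddGroup.eq_zero_iff]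
      rintro ⟨x, hx⟩
      exact hno ⟨x, fun i => congrFun hx i⟩
    have hQ : ∀ q : (Fin m → ZMod n) ⧸ W, n • q = 0 := by
      intro q
      induction q using QuotientAddGroup.induction_on with
      | H z =>
        rw [← QuotientAddGroup.mk_nsmul]
        have : n • z = 0 := by
          funext i
          simp [nsmul_eq_mul, ZMod.natCast_self]
        rw [this]; rfl
    obtain ⟨ψ, hψ⟩ := exists_hom_to_zmod hQ hc
    set Ψ : (Fin m → ZMod n) →+ ZMod n :=
      ψ.comp (QuotientAddGroup.mk' W) with hΨ
    have key : ∀ v : Fin m → ZMod n, Ψ v = ∑ i, v i * Ψ (Pi.single i 1) := by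
      intro v
      have hv : v = ∑ i, Pi.single i (v i) := (Finset.univ_sum_single v).symm
      rw [hv, map_sum]
      refine Finset.sum_congr rfl fun i _ => ?_
      have : Pi.single i (v i) = ((v i).val • Pi.single i (1 : ZMod n) : Fin m → ZMod n) := by
        funext j
        by_cases h : j = i
        · subst h; simp [nsmul_eq_mul, ZMod.natCast_val, ZMod.cast_id]
        · simp [Pi.single_apply, h]
      rw [this, map_nsmul, nsmul_eq_mul]
      simp [Finset.univ_sum_single, ZMod.natCast_val, ZMod.cast_id]
    refine ⟨fun i => Ψ (Pi.single i 1), ?_, ?_⟩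
    · intro x
      have hΦx : Ψ (Φ x) = 0 := by
        simp only [hΨ, AddMonoidHom.comp_apply]
        rw [show (QuotientAddGroup.mk' W) (Φ x) = 0 from
          (QuotientAddGroup.eq_zero_iff _).mpr ⟨x, rfl⟩, map_zero]
      calc ∑ i : Fin m, Ψ (Pi.single i 1) * φ i x
          = ∑ i, (Φ x) i * Ψ (Pi.single i 1) := by
            refine Finset.sum_congr rfl fun i _ => mul_comm _ _
        _ = Ψ (Φ x) := (key (Φ x)).symm
        _ = 0 := hΦx
    · have := key c
      intro h0
      apply hψ
      have hΨc : Ψ c = 0 := by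
        rw [this, ← h0]
        exact Finset.sum_congr rfl fun i _ => mul_comm _ _
      simpa [hΨ] using hΨc
  · rintro ⟨b, hb, hbc⟩ ⟨x, hx⟩
    apply hbc
    rw [← hb x]
    exact Finset.sum_congr rfl fun i _ => by rw [hx i]
end

section
/- Let G be a torsion abelian group such that for every integer n ≥ 1 the n-torsion subgroup G[n] = {g ∈ G : n·g = 0} is finite. Then the subgroup ⋂_{n≥1} nG of divisible elements of G is itself a divisible group; consequently it coincides with the maximal divisible subgroup of G. -/
/-- The set of divisible elements of an abelian group `G`: those `g` lying in `nG` for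
every `n ≥ 1`. -/
def divisibleElements (G : Type*) [AddCommGroup G] : Set G :=
  {g : G | ∀ n : ℕ, 1 ≤ n → ∃ h : G, n • h = g}

/-- Let `G` be a torsion abelian group all of whose `n`-torsion subgroups are finite.
Then the subgroup `⋂_{n≥1} nG` of divisible elements of `G` is itself a divisible group;
consequently it coincides with the maximal divisible subgroup of `G` (i.e. it is divisible
and contains every divisible subgroup of `G`). -/
theorem divisibleElements_divisible_of_torsion_of_finite (G : Type*) [AddCommGroup G]
    (htors : ∀ g : G, ∃ m : ℕ, 1 ≤ m ∧ m • g = 0)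
    (hfin : ∀ m : ℕ, 1 ≤ m → {g : G | m • g = 0}.Finite) :
    (∀ g ∈ divisibleElements G, ∀ m : ℕ, 1 ≤ m →
        ∃ e ∈ divisibleElements G, m • e = g) ∧
    (∀ H : AddSubgroup G, (∀ h ∈ H, ∀ m : ℕ, 1 ≤ m → ∃ e ∈ H, m • e = h) →
        (H : Set G) ⊆ divisibleElements G) := by
  constructor
  · intro g hg m hm
    -- the solution set of `m • e = g` is finite
    have hSfin : {e : G | m • e = g}.Finite := by
      obtain ⟨e₀, he₀⟩ := hg m hm
      have : {e : G | m • e = g} ⊆ (fun x => e₀ + x) '' {x : G | m • x = 0} := by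
        intro e he
        have he' : m • e = g := he
        exact ⟨e - e₀, by simp [smul_sub, he', he₀], by simp⟩
      exact ((hfin m hm).image _).subset this
    -- for each n, pick a solution lying in `n! • G`
    have key : ∀ n : ℕ, ∃ e : G, m • e = g ∧ ∃ h : G, (n.factorial) • h = e := by
      intro n
      obtain ⟨h, hh⟩ := hg (m * n.factorial)
        (Nat.one_le_iff_ne_zero.mpr (by positivity))
      exact ⟨n.factorial • h, by rw [← mul_smul]; exact hh, h, rfl⟩
    choose f hf1 hf2 using key
    -- pigeonhole: some solution occurs for infinitely many `n`
    haveI : Finite {e : G // m • e = g} := hSfin.to_subtype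
    obtain ⟨⟨e, he⟩, hfib⟩ :=
      Finite.exists_infinite_fiber (fun n : ℕ => (⟨f n, hf1 n⟩ : {e : G // m • e = g}))
    refine ⟨e, ?_, he⟩
    intro k hk
    have hinf : {n : ℕ | f n = e}.Infinite := by
      have : ((fun n : ℕ => (⟨f n, hf1 n⟩ : {e : G // m • e = g})) ⁻¹'
          {⟨e, he⟩}) ⊆ {n : ℕ | f n = e} := by
        intro n hn
        simpa [Subtype.ext_iff] using hn
      exact ((Set.infinite_coe_iff.mp hfib).mono this)
    obtain ⟨n, hn, hkn⟩ := hinf.exists_gt k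
    obtain ⟨c, hc⟩ : k ∣ n.factorial :=
      Nat.dvd_factorial hk hkn.le
    obtain ⟨h, hh⟩ := hf2 n
    refine ⟨c • h, ?_⟩
    rw [← mul_smul, ← hc, hh, hn]
  · intro H hH g hg k hk
    obtain ⟨e, _, he⟩ := hH g hg k hk
    exact ⟨e, he⟩
end
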